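/- Let E be a centered A-A-bimodule which is finitely generated projective as a right A-module, and g a pseudo-Riemannian bilinear metric on E. Define g⁽²⁾ : (E ⊗_A E) ⊗_A (E ⊗_A E) → A by g⁽²⁾((e ⊗ f) ⊗ (e' ⊗ f')) = g(e ⊗ g(f ⊗ e')f'). Then the induced map V_{g⁽²⁾} : E ⊗_A E → (E ⊗_A E)* is a right A-module isomorphism. -/

import Mathlib

open MulOpposite

namespace Vg2Aux

variable {A E T : Type*} [Ring A] [AddCommGroup E] [Module A E] [Module Aᵐᵒᵖ E]
  [AddCommGroup T]

/-- Bundle an additive, right `A`-linear functional as an `Aᵐᵒᵖ`-linear map. -/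
def mkLin (h : E → A) (hadd : ∀ x y, h (x + y) = h x + h y)
    (hsm : ∀ (a : A) (x : E), h (op a • x) = h x * a) : E →ₗ[Aᵐᵒᵖ] A where
  toFun := h
  map_add' := hadd
  map_smul' m x := by
    have h2 := hsm m.unop x
    rw [op_unop] at h2
    show h (m • x) = m • h x
    rw [h2]; rfl

@[simp] theorem mkLin_apply (h : E → A) (hadd : ∀ x y, h (x + y) = h x + h y)
    (hsm : ∀ (a : A) (x : E), h (op a • x) = h x * a) (x : E) :
    mkLin h hadd hsm x = h x := rfl

/-- `κ`: the element representing (via `g`) the functional `f' ↦ p e' f'`. -/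
def kap (invg : (E →ₗ[Aᵐᵒᵖ] A) → E) (p : E → E → A)
    (hp1 : ∀ e f f', p e (f + f') = p e f + p e f')
    (hp2 : ∀ (a : A) (e f : E), p e (op a • f) = p e f * a) : E → E :=
  fun e' => invg (mkLin (fun f' => p e' f') (hp1 e') (fun a x => hp2 a e' x))

theorem kap_spec (g : E → E → A) (invg : (E →ₗ[Aᵐᵒᵖ] A) → E)
    (hinv : ∀ (φ : E →ₗ[Aᵐᵒᵖ] A) (f : E), g (invg φ) f = φ f)
    (p : E → E → A)
    (hp1 : ∀ e f f', p e (f + f') = p e f + p e f')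
    (hp2 : ∀ (a : A) (e f : E), p e (op a • f) = p e f * a) :
    ∀ e' f', g (kap invg p hp1 hp2 e') f' = p e' f' :=
  fun _ f' => hinv _ f'

theorem kap_eq (g : E → E → A) (invg : (E →ₗ[Aᵐᵒᵖ] A) → E)
    (hinvu : ∀ (φ : E →ₗ[Aᵐᵒᵖ] A) (y : E), (∀ f, g y f = φ f) → y = invg φ)
    (p : E → E → A)
    (hp1 : ∀ e f f', p e (f + f') = p e f + p e f')
    (hp2 : ∀ (a : A) (e f : E), p e (op a • f) = p e f * a)
    (e' : E) (y : E) (hy : ∀ f', g y f' = p e' f') :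
    y = kap invg p hp1 hp2 e' :=
  hinvu _ y hy

theorem kap_add (g : E → E → A) (invg : (E →ₗ[Aᵐᵒᵖ] A) → E)
    (hinv : ∀ (φ : E →ₗ[Aᵐᵒᵖ] A) (f : E), g (invg φ) f = φ f)
    (hinvu : ∀ (φ : E →ₗ[Aᵐᵒᵖ] A) (y : E), (∀ f, g y f = φ f) → y = invg φ)
    (hgaddl : ∀ e e' f, g (e + e') f = g e f + g e' f)
    (p : E → E → A)
    (hp1 : ∀ e f f', p e (f + f') = p e f + p e f')
    (hp2 : ∀ (a : A) (e f : E), p e (op a • f) = p e f * a)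
    (hp3 : ∀ e1 e2 f, p (e1 + e2) f = p e1 f + p e2 f) (e1 e2 : E) :
    kap invg p hp1 hp2 (e1 + e2) = kap invg p hp1 hp2 e1 + kap invg p hp1 hp2 e2 := by
  refine (kap_eq g invg hinvu p hp1 hp2 (e1 + e2) _ fun f' => ?_).symm
  rw [hgaddl, kap_spec g invg hinv, kap_spec g invg hinv, hp3]

theorem kap_opsmul (g : E → E → A) (invg : (E →ₗ[Aᵐᵒᵖ] A) → E)
    (hinv : ∀ (φ : E →ₗ[Aᵐᵒᵖ] A) (f : E), g (invg φ) f = φ f)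
    (hinvu : ∀ (φ : E →ₗ[Aᵐᵒᵖ] A) (y : E), (∀ f, g y f = φ f) → y = invg φ)
    (hgbal : ∀ (a : A) (e f : E), g (op a • e) f = g e (a • f))
    (p : E → E → A)
    (hp1 : ∀ e f f', p e (f + f') = p e f + p e f')
    (hp2 : ∀ (a : A) (e f : E), p e (op a • f) = p e f * a)
    (hp4 : ∀ (a : A) (e f : E), p (op a • e) f = p e (a • f)) (a : A) (e' : E) :
    kap invg p hp1 hp2 (op a • e') = op a • kap invg p hp1 hp2 e' := by
  refine (kap_eq g invg hinvu p hp1 hp2 (op a • e') _ fun f' => ?_).symm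
  rw [hgbal, kap_spec g invg hinv, hp4]

/-- `χ i`: the functional `e' ↦ unop (σ (κ e') i)` as an `Aᵐᵒᵖ`-linear map. -/
def chi {n : ℕ} (g : E → E → A) (invg : (E →ₗ[Aᵐᵒᵖ] A) → E)
    (hinv : ∀ (φ : E →ₗ[Aᵐᵒᵖ] A) (f : E), g (invg φ) f = φ f)
    (hinvu : ∀ (φ : E →ₗ[Aᵐᵒᵖ] A) (y : E), (∀ f, g y f = φ f) → y = invg φ)
    (σ : E →ₗ[Aᵐᵒᵖ] (Fin n → Aᵐᵒᵖ))
    (hgaddl : ∀ e e' f, g (e + e') f = g e f + g e' f)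
    (hgbal : ∀ (a : A) (e f : E), g (op a • e) f = g e (a • f))
    (p : E → E → A)
    (hp1 : ∀ e f f', p e (f + f') = p e f + p e f')
    (hp2 : ∀ (a : A) (e f : E), p e (op a • f) = p e f * a)
    (hp3 : ∀ e1 e2 f, p (e1 + e2) f = p e1 f + p e2 f)
    (hp4 : ∀ (a : A) (e f : E), p (op a • e) f = p e (a • f)) (i : Fin n) :
    E →ₗ[Aᵐᵒᵖ] A :=
  mkLin (fun e' => unop (σ (kap invg p hp1 hp2 e') i))
    (by
      intro x y
      show unop (σ (kap invg p hp1 hp2 (x + y)) i)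
        = unop (σ (kap invg p hp1 hp2 x) i) + unop (σ (kap invg p hp1 hp2 y) i)
      rw [kap_add g invg hinv hinvu hgaddl p hp1 hp2 hp3, map_add]
      simp)
    (by
      intro a x
      show unop (σ (kap invg p hp1 hp2 (op a • x)) i)
        = unop (σ (kap invg p hp1 hp2 x) i) * a
      rw [kap_opsmul g invg hinv hinvu hgbal p hp1 hp2 hp4, map_smul]
      show unop (op a • σ (kap invg p hp1 hp2 x) i) = _
      rw [smul_eq_mul, unop_mul, unop_op])

/-- the candidate preimage under `V_{g⁽²⁾}` of the functional determined by `p`. -/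
def build {n : ℕ} (g : E → E → A) (invg : (E →ₗ[Aᵐᵒᵖ] A) → E)
    (hinv : ∀ (φ : E →ₗ[Aᵐᵒᵖ] A) (f : E), g (invg φ) f = φ f)
    (hinvu : ∀ (φ : E →ₗ[Aᵐᵒᵖ] A) (y : E), (∀ f, g y f = φ f) → y = invg φ)
    (σ : E →ₗ[Aᵐᵒᵖ] (Fin n → Aᵐᵒᵖ)) (tmul : E → E → T) (ω : Fin n → E)
    (hgaddl : ∀ e e' f, g (e + e') f = g e f + g e' f)
    (hgbal : ∀ (a : A) (e f : E), g (op a • e) f = g e (a • f))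
    (p : E → E → A)
    (hp1 : ∀ e f f', p e (f + f') = p e f + p e f')
    (hp2 : ∀ (a : A) (e f : E), p e (op a • f) = p e f * a)
    (hp3 : ∀ e1 e2 f, p (e1 + e2) f = p e1 f + p e2 f)
    (hp4 : ∀ (a : A) (e f : E), p (op a • e) f = p e (a • f)) : T :=
  ∑ i, tmul (ω i) (invg (chi g invg hinv hinvu σ hgaddl hgbal p hp1 hp2 hp3 hp4 i))

end Vg2Aux

/-- Let `E` be a centered `A`-`A`-bimodule which is finitely generated
projective as a right `A`-module, and `g` a pseudo-Riemannian bilinear metric on `E`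
(an `A`-`A`-bimodule map `E ⊗_A E → A`, symmetric with respect to the canonical flip and
non-degenerate).  Define `g⁽²⁾ : (E ⊗_A E) ⊗_A (E ⊗_A E) → A` by
`g⁽²⁾((e ⊗ f) ⊗ (e' ⊗ f')) = g(e ⊗ g(f ⊗ e')f')`.  Then the induced map
`V_{g⁽²⁾} : E ⊗_A E → (E ⊗_A E)*` is a right `A`-module isomorphism; equivalently,
for every right `A`-linear functional `φ` on `E ⊗_A E` there is a unique `x ∈ E ⊗_A E`
with `g⁽²⁾(x ⊗ ·) = φ`.  Here `T` with `tmul` (balanced, biadditive, satisfying the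
universal property) plays the role of `E ⊗_A E`. -/
theorem Vg2_is_isomorphism
    {A E T : Type*} [Ring A] [AddCommGroup E] [Module A E] [Module Aᵐᵒᵖ E]
    [SMulCommClass A Aᵐᵒᵖ E]
    [AddCommGroup T] [Module A T] [Module Aᵐᵒᵖ T] [SMulCommClass A Aᵐᵒᵖ T]
    [Module.Finite Aᵐᵒᵖ E] [Module.Projective Aᵐᵒᵖ E]
    (hcent : Submodule.span Aᵐᵒᵖ {e : E | ∀ b : A, b • e = op b • e} = ⊤)
    (tmul : E → E → T)
    (htl : ∀ e e' f : E, tmul (e + e') f = tmul e f + tmul e' f)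
    (htr : ∀ e f f' : E, tmul e (f + f') = tmul e f + tmul e f')
    (htbal : ∀ (a : A) (e f : E), tmul (op a • e) f = tmul e (a • f))
    (htA : ∀ (a : A) (e f : E), a • tmul e f = tmul (a • e) f)
    (htAop : ∀ (a : A) (e f : E), op a • tmul e f = tmul e (op a • f))
    (huniv : ∀ (P : Type*) [AddCommGroup P] (φ : E → E → P),
      (∀ e e' f : E, φ (e + e') f = φ e f + φ e' f) →
      (∀ e f f' : E, φ e (f + f') = φ e f + φ e f') →
      (∀ (a : A) (e f : E), φ (op a • e) f = φ e (a • f)) →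
      ∃! Φ : T →+ P, ∀ e f : E, Φ (tmul e f) = φ e f)
    (g : E → E → A)
    (hgaddl : ∀ e e' f, g (e + e') f = g e f + g e' f)
    (hgaddr : ∀ e f f', g e (f + f') = g e f + g e f')
    (hgbal : ∀ (a : A) (e f : E), g (op a • e) f = g e (a • f))
    (hgA : ∀ (a : A) (e f : E), g (a • e) f = a * g e f)
    (hgAop : ∀ (a : A) (e f : E), g e (op a • f) = g e f * a)
    (hgsym : ∀ ω η : E, (∀ b : A, b • ω = op b • ω) → (∀ b : A, b • η = op b • η) →
      ∀ a : A, g ω (op a • η) = g η (op a • ω))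
    (hgnondeg : ∀ φ : E →ₗ[Aᵐᵒᵖ] A, ∃! e : E, ∀ f, g e f = φ f)
    (g2 : T → T → A)
    (hg2addl : ∀ x x' y : T, g2 (x + x') y = g2 x y + g2 x' y)
    (hg2addr : ∀ x y y' : T, g2 x (y + y') = g2 x y + g2 x y')
    (hg2def : ∀ e f e' f' : E,
      g2 (tmul e f) (tmul e' f') = g e ((g f e') • f')) :
    ∀ φ : T →ₗ[Aᵐᵒᵖ] A, ∃! x : T, ∀ y : T, g2 x y = φ y := by
  classical
  intro φ
  -- choice function for the nondegeneracy of g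
  choose invg hinv hinvu using hgnondeg
  -- dual basis for E as a f.g. projective Aᵐᵒᵖ-module
  obtain ⟨n, π, hπ⟩ := Module.Finite.exists_fin' Aᵐᵒᵖ E
  obtain ⟨σ, hσ⟩ := Module.projective_lifting_property π LinearMap.id hπ
  set ω : Fin n → E := fun i => π (Pi.single i 1) with hω
  have hsec : ∀ e : E, ∑ i, σ e i • ω i = e := by
    intro e
    have h1 : ∀ v : Fin n → Aᵐᵒᵖ, π v = ∑ i, v i • ω i := by
      intro v
      have hv : v = ∑ i, v i • Pi.single i (1 : Aᵐᵒᵖ) := by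
        funext j
        simp [Finset.sum_apply, Pi.single_apply]
      conv_lhs => rw [hv]
      rw [map_sum]
      simp only [map_smul]
      rfl
    have h2 : π (σ e) = e := congrFun (congrArg DFunLike.coe hσ) e
    rw [← h1, h2]
  -- additive monoid homs out of slices of bilinear maps
  have tmul0l : ∀ f : E, tmul 0 f = 0 := by
    intro f
    have h := htl 0 0 f
    rw [add_zero] at h
    exact (left_eq_add.mp h)
  have tmul0r : ∀ e : E, tmul e 0 = 0 := by
    intro e
    have h := htr e 0 0
    rw [add_zero] at h
    exact (left_eq_add.mp h)
  have g2zero : ∀ y : T, g2 0 y = 0 := by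
    intro y
    have h := hg2addl 0 0 y
    rw [add_zero] at h
    exact (left_eq_add.mp h)
  have gzerol : ∀ f : E, g 0 f = 0 := by
    intro f
    have h := hgaddl 0 0 f
    rw [add_zero] at h
    exact (left_eq_add.mp h)
  have g2sum : ∀ (s : Finset (Fin n)) (c : Fin n → T) (y : T),
      g2 (∑ i ∈ s, c i) y = ∑ i ∈ s, g2 (c i) y := by
    intro s c y
    induction s using Finset.induction with
    | empty => simpa using g2zero y
    | insert _ _ hx ih => rw [Finset.sum_insert hx, Finset.sum_insert hx, hg2addl, ih]
  have gsuml : ∀ (s : Finset (Fin n)) (v : Fin n → E) (f : E),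
      g (∑ i ∈ s, v i) f = ∑ i ∈ s, g (v i) f := by
    intro s v f
    induction s using Finset.induction with
    | empty => simpa using gzerol f
    | insert _ _ hx ih => rw [Finset.sum_insert hx, Finset.sum_insert hx, hgaddl, ih]
  have tmulsuml : ∀ (s : Finset (Fin n)) (v : Fin n → E) (f : E),
      tmul (∑ i ∈ s, v i) f = ∑ i ∈ s, tmul (v i) f := by
    intro s v f
    induction s using Finset.induction with
    | empty => simpa using tmul0l f
    | insert _ _ hx ih => rw [Finset.sum_insert hx, Finset.sum_insert hx, htl, ih]
  -- T is generated, as an additive group, by the simple tensors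
  have hgen : AddSubgroup.closure (Set.range fun pr : E × E => tmul pr.1 pr.2)
      = (⊤ : AddSubgroup T) := by
    set S := AddSubgroup.closure (Set.range fun pr : E × E => tmul pr.1 pr.2) with hS
    rw [eq_top_iff]
    intro t _
    have key : ∀ c : CharacterModule (T ⧸ S), c ((QuotientAddGroup.mk' S) t) = 0 := by
      intro c
      obtain ⟨Φ₀, hΦ₀, hu⟩ := huniv (ULift (AddCircle (1 : ℚ))) (fun _ _ => 0)
        (fun _ _ _ => by simp) (fun _ _ _ => by simp) (fun _ _ _ => rfl)
      have hmem : ∀ e f : E, tmul e f ∈ S := by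
        intro e f
        exact AddSubgroup.subset_closure ⟨(e, f), rfl⟩
      have h1 : (AddMonoidHom.mk' (fun z : T => ULift.up (c ((QuotientAddGroup.mk' S) z)))
          (fun z w => by simp [map_add]; rfl)) = Φ₀ := by
        refine hu _ fun e f => ?_
        have h0 : ((QuotientAddGroup.mk' S) (tmul e f)) = 0 :=
          (QuotientAddGroup.eq_zero_iff _).mpr (hmem e f)
        show ULift.up (c ((QuotientAddGroup.mk' S) (tmul e f))) = 0
        rw [h0, map_zero]
        rfl
      have h2 : (0 : T →+ ULift (AddCircle (1 : ℚ))) = Φ₀ := hu _ fun e f => rfl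
      have := congrFun (congrArg DFunLike.coe (h1.trans h2.symm)) t
      simpa using congrArg ULift.down this
    have : (QuotientAddGroup.mk' S) t = 0 := CharacterModule.eq_zero_of_character_apply key
    exact (QuotientAddGroup.eq_zero_iff t).mp this
  -- the "agreement" principle
  have agree : ∀ (F G : T →+ A), (∀ e f, F (tmul e f) = G (tmul e f)) → ∀ y, F y = G y := by
    intro F G h y
    have hy : y ∈ AddSubgroup.closure (Set.range fun pr : E × E => tmul pr.1 pr.2) := by
      rw [hgen]; trivial
    induction hy using AddSubgroup.closure_induction with
    | mem x hx => obtain ⟨⟨e, f⟩, rfl⟩ := hx; exact h e f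
    | zero => simp
    | add x y _ _ hx hy => simp [map_add, hx, hy]
    | neg x _ hx => simp [map_neg, hx]
  have agreeT : ∀ (F G : T →+ T), (∀ e f, F (tmul e f) = G (tmul e f)) → ∀ y, F y = G y := by
    intro F G h y
    have hy : y ∈ AddSubgroup.closure (Set.range fun pr : E × E => tmul pr.1 pr.2) := by
      rw [hgen]; trivial
    induction hy using AddSubgroup.closure_induction with
    | mem x hx => obtain ⟨⟨e, f⟩, rfl⟩ := hx; exact h e f
    | zero => simp
    | add x y _ _ hx hy => simp [map_add, hx, hy]
    | neg x _ hx => simp [map_neg, hx]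
  -- g2 x is compatible with the right Aᵐᵒᵖ action on simple tensors
  have hg2op : ∀ (x : T) (a : A) (e' f' : E),
      g2 x (tmul e' (op a • f')) = g2 x (tmul e' f') * a := by
    intro x a e' f'
    refine agree (AddMonoidHom.mk' (fun z => g2 z (tmul e' (op a • f')))
        (fun z w => hg2addl z w _))
      (AddMonoidHom.mk' (fun z => g2 z (tmul e' f') * a)
        (fun z w => by show g2 (z + w) (tmul e' f') * a = _; rw [hg2addl, add_mul])) (fun e f => ?_) x
    show g2 (tmul e f) (tmul e' (op a • f')) = g2 (tmul e f) (tmul e' f') * a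
    rw [hg2def, hg2def, smul_comm, hgAop]
  -- properties of p_x := fun e' f' => g2 x (tmul e' f')
  have hp1x : ∀ (x : T) (e f f' : E),
      g2 x (tmul e (f + f')) = g2 x (tmul e f) + g2 x (tmul e f') := by
    intro x e f f'; rw [htr, hg2addr]
  have hp3x : ∀ (x : T) (e1 e2 f : E),
      g2 x (tmul (e1 + e2) f) = g2 x (tmul e1 f) + g2 x (tmul e2 f) := by
    intro x e1 e2 f; rw [htl, hg2addr]
  have hp4x : ∀ (x : T) (a : A) (e f : E),
      g2 x (tmul (op a • e) f) = g2 x (tmul e (a • f)) := by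
    intro x a e f; rw [htbal]
  -- the building construction, specialised
  let B : ∀ (p : E → E → A),
      (∀ e f f', p e (f + f') = p e f + p e f') →
      (∀ (a : A) (e f : E), p e (op a • f) = p e f * a) →
      (∀ e1 e2 f, p (e1 + e2) f = p e1 f + p e2 f) →
      (∀ (a : A) (e f : E), p (op a • e) f = p e (a • f)) → T := fun p hp1 hp2 hp3 hp4 =>
    Vg2Aux.build g invg hinv hinvu σ tmul ω hgaddl hgbal p hp1 hp2 hp3 hp4
  -- Lemma A: g2 (B p) (tmul e' f') = p e' f'
  have lemA : ∀ (p : E → E → A)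
      (hp1 : ∀ e f f', p e (f + f') = p e f + p e f')
      (hp2 : ∀ (a : A) (e f : E), p e (op a • f) = p e f * a)
      (hp3 : ∀ e1 e2 f, p (e1 + e2) f = p e1 f + p e2 f)
      (hp4 : ∀ (a : A) (e f : E), p (op a • e) f = p e (a • f)) (e' f' : E),
      g2 (B p hp1 hp2 hp3 hp4) (tmul e' f') = p e' f' := by
    intro p hp1 hp2 hp3 hp4 e' f'
    show g2 (∑ i, tmul (ω i)
      (invg (Vg2Aux.chi g invg hinv hinvu σ hgaddl hgbal p hp1 hp2 hp3 hp4 i))) (tmul e' f') = _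
    rw [g2sum]
    have step : ∀ i : Fin n,
        g2 (tmul (ω i)
              (invg (Vg2Aux.chi g invg hinv hinvu σ hgaddl hgbal p hp1 hp2 hp3 hp4 i)))
            (tmul e' f')
          = g ((σ (Vg2Aux.kap invg p hp1 hp2 e') i) • ω i) f' := by
      intro i
      rw [hg2def]
      have hc : g (invg (Vg2Aux.chi g invg hinv hinvu σ hgaddl hgbal p hp1 hp2 hp3 hp4 i)) e'
          = unop (σ (Vg2Aux.kap invg p hp1 hp2 e') i) := hinv _ e'
      rw [hc, ← hgbal, op_unop]
    rw [Finset.sum_congr rfl fun i _ => step i, ← gsuml, hsec,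
      Vg2Aux.kap_spec g invg hinv]
  -- Lemma B: if p has the special shape coming from tmul e f, then B p = tmul e f
  have lemB : ∀ (e f : E) (p : E → E → A)
      (hp1 : ∀ e f f', p e (f + f') = p e f + p e f')
      (hp2 : ∀ (a : A) (e f : E), p e (op a • f) = p e f * a)
      (hp3 : ∀ e1 e2 f, p (e1 + e2) f = p e1 f + p e2 f)
      (hp4 : ∀ (a : A) (e f : E), p (op a • e) f = p e (a • f)),
      (∀ e' f', p e' f' = g e ((g f e') • f')) → B p hp1 hp2 hp3 hp4 = tmul e f := by
    intro e f p hp1 hp2 hp3 hp4 hpdef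
    have hkap : ∀ e', Vg2Aux.kap invg p hp1 hp2 e' = op (g f e') • e := by
      intro e'
      refine (Vg2Aux.kap_eq g invg hinvu p hp1 hp2 e' _ fun f' => ?_).symm
      rw [hgbal, hpdef]
    have hcval : ∀ i, invg (Vg2Aux.chi g invg hinv hinvu σ hgaddl hgbal p hp1 hp2 hp3 hp4 i)
        = unop (σ e i) • f := by
      intro i
      refine (hinvu _ _ fun e' => ?_).symm
      show g (unop (σ e i) • f) e'
          = unop (σ (Vg2Aux.kap invg p hp1 hp2 e') i)
      rw [hgA, hkap, map_smul]
      show _ = unop (op (g f e') • σ e i)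
      rw [smul_eq_mul, unop_mul, unop_op]
    show (∑ i, tmul (ω i)
      (invg (Vg2Aux.chi g invg hinv hinvu σ hgaddl hgbal p hp1 hp2 hp3 hp4 i))) = tmul e f
    rw [Finset.sum_congr rfl fun i _ => by rw [hcval i]]
    have h1 : ∀ i : Fin n, tmul (ω i) (unop (σ e i) • f) = tmul ((σ e i) • ω i) f := by
      intro i
      rw [← htbal, op_unop]
    rw [Finset.sum_congr rfl fun i _ => h1 i, ← tmulsuml, hsec]
  -- R : T → T, the retraction x ↦ B (p_x)
  let R : T → T := fun x => B (fun e' f' => g2 x (tmul e' f'))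
    (hp1x x) (fun a e' f' => hg2op x a e' f') (hp3x x) (hp4x x)
  have hRadd : ∀ x y : T, R (x + y) = R x + R y := by
    intro x y
    show Vg2Aux.build g invg hinv hinvu σ tmul ω hgaddl hgbal _ _ _ _ _
      = Vg2Aux.build g invg hinv hinvu σ tmul ω hgaddl hgbal _ _ _ _ _
      + Vg2Aux.build g invg hinv hinvu σ tmul ω hgaddl hgbal _ _ _ _ _
    unfold Vg2Aux.build
    rw [← Finset.sum_add_distrib]
    refine Finset.sum_congr rfl fun i _ => ?_
    have hkadd : Vg2Aux.kap invg (fun e' f' => g2 (x + y) (tmul e' f')) (hp1x (x+y))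
          (fun a e' f' => hg2op (x+y) a e' f')
        = fun e' => Vg2Aux.kap invg (fun e' f' => g2 x (tmul e' f')) (hp1x x)
            (fun a e' f' => hg2op x a e' f') e'
          + Vg2Aux.kap invg (fun e' f' => g2 y (tmul e' f')) (hp1x y)
            (fun a e' f' => hg2op y a e' f') e' := by
      funext e'
      refine (Vg2Aux.kap_eq g invg hinvu _ _ _ e' _ fun f' => ?_).symm
      rw [hgaddl, Vg2Aux.kap_spec g invg hinv, Vg2Aux.kap_spec g invg hinv, hg2addl]
    have hcadd : invg (Vg2Aux.chi g invg hinv hinvu σ hgaddl hgbal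
          (fun e' f' => g2 (x + y) (tmul e' f')) (hp1x (x+y))
          (fun a e' f' => hg2op (x+y) a e' f') (hp3x (x+y)) (hp4x (x+y)) i)
        = invg (Vg2Aux.chi g invg hinv hinvu σ hgaddl hgbal
            (fun e' f' => g2 x (tmul e' f')) (hp1x x)
            (fun a e' f' => hg2op x a e' f') (hp3x x) (hp4x x) i)
          + invg (Vg2Aux.chi g invg hinv hinvu σ hgaddl hgbal
            (fun e' f' => g2 y (tmul e' f')) (hp1x y)
            (fun a e' f' => hg2op y a e' f') (hp3x y) (hp4x y) i) := by
      refine (hinvu _ _ fun e' => ?_).symm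
      rw [hgaddl, hinv, hinv]
      show unop (σ _ i) + unop (σ _ i) = unop (σ (Vg2Aux.kap invg _ _ _ e') i)
      rw [congrFun hkadd e', map_add]
      simp
    rw [hcadd, htr]
  have hRtmul : ∀ e f : E, R (tmul e f) = tmul e f := by
    intro e f
    exact lemB e f _ _ _ _ _ (fun e' f' => hg2def e f e' f')
  have hRid : ∀ x : T, R x = x := by
    intro x
    exact agreeT (AddMonoidHom.mk' R hRadd) (AddMonoidHom.id T)
      (fun e f => hRtmul e f) x
  -- existence: build from φ itself
  have hpφ1 : ∀ e f f' : E, φ (tmul e (f + f')) = φ (tmul e f) + φ (tmul e f') := by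
    intro e f f'; rw [htr, map_add]
  have hpφ2 : ∀ (a : A) (e f : E), φ (tmul e (op a • f)) = φ (tmul e f) * a := by
    intro a e f
    rw [← htAop, map_smul]
    rfl
  have hpφ3 : ∀ e1 e2 f : E, φ (tmul (e1 + e2) f) = φ (tmul e1 f) + φ (tmul e2 f) := by
    intro e1 e2 f; rw [htl, map_add]
  have hpφ4 : ∀ (a : A) (e f : E), φ (tmul (op a • e) f) = φ (tmul e (a • f)) := by
    intro a e f; rw [htbal]
  refine ⟨B (fun e' f' => φ (tmul e' f')) hpφ1 hpφ2 hpφ3 hpφ4, ?_, ?_⟩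
  · -- the built element works on all of T
    intro y
    refine agree (AddMonoidHom.mk' (fun z => g2 (B (fun e' f' => φ (tmul e' f'))
        hpφ1 hpφ2 hpφ3 hpφ4) z) (fun z w => hg2addr _ z w)) φ.toAddMonoidHom
      (fun e f => ?_) y
    show g2 _ (tmul e f) = φ (tmul e f)
    exact lemA _ hpφ1 hpφ2 hpφ3 hpφ4 e f
  · -- uniqueness
    intro x hx
    have hpeq : (fun e' f' => g2 x (tmul e' f')) = (fun e' f' => φ (tmul e' f')) := by
      funext e' f'
      exact hx (tmul e' f')
    have : R x = B (fun e' f' => φ (tmul e' f')) hpφ1 hpφ2 hpφ3 hpφ4 := by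
      show B _ _ _ _ _ = B _ _ _ _ _
      congr 1
    rw [← this, hRid]
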